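/- Let $R$ be a commutative ring, $P \in R[X]$ a monic polynomial of degree $n+1$, and let $\int: R[X]/(P) \to R$ be the $R$-linear map sending the class of a polynomial $f$ to the coefficient of $X^n$ in the unique representative $\tilde f$ of degree $\le n$. Then for any $f \in R[X]$ and any $t \in R$, $\int \left( \frac{P(X)-P(t)}{X-t} \cdot f(X) \right) = \tilde f(t)$, where $\frac{P(X)-P(t)}{X-t}$ denotes the polynomial quotient of $P(X) - P(t)$ by $X - t$ in $R[X]$ (which exists since $X - t$ divides $P(X)-P(t)$). -/

import Mathlib

open Polynomial

/-- for a monic `P` of degree `n+1` over a commutative ring `R`, the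
"integral" map sending (the class of) `f` to the `Xⁿ`-coefficient of its degree-`≤ n`
representative `f %ₘ P` satisfies `∫ ((P(X)-P(t))/(X-t) · f) = f̃(t)`. -/
theorem stmt_3 {R : Type*} [CommRing R] (n : ℕ) (P : R[X]) (hP : P.Monic)
    (hdeg : P.natDegree = n + 1) (f : R[X]) (t : R) :
    ((((P - C (P.eval t)) /ₘ (X - C t)) * f) %ₘ P).coeff n = (f %ₘ P).eval t := by
  nontriviality R
  have hXt : (X - C t).Monic := monic_X_sub_C t
  have hPdeg : P.degree = (n + 1 : ℕ) := by rw [← hdeg, degree_eq_natDegree hP.ne_zero]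
  obtain ⟨Q, hQ⟩ : ∃ Q, Q = P /ₘ (X - C t) := ⟨_, rfl⟩
  have hPsplit : P = (X - C t) * Q + C (P.eval t) := by
    have e1 := modByMonic_add_div P (X - C t)
    rw [modByMonic_X_sub_C_eq_C_eval] at e1
    rw [hQ]
    linear_combination -e1
  have hid : (P - C (P.eval t)) /ₘ (X - C t) = Q := by
    have : P - C (P.eval t) = (X - C t) * Q := by linear_combination hPsplit
    rw [this, mul_divByMonic_cancel_left _ hXt]
  rw [hid]
  have hQdeg : Q.natDegree = n := by
    rw [hQ, natDegree_divByMonic _ hXt, hdeg, natDegree_X_sub_C]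
    omega

  have hQmonic : Q.Monic := by
    unfold Monic
    rw [hQ, leadingCoeff_divByMonic_of_monic hXt, hP.leadingCoeff]
    rw [degree_X_sub_C, hPdeg]
    exact_mod_cast Nat.le_add_left 1 n
  -- reduce f to g := f %ₘ P
  obtain ⟨g, hg⟩ : ∃ g, g = f %ₘ P := ⟨_, rfl⟩
  have hred : (Q * f) %ₘ P = (Q * g) %ₘ P := by
    conv_lhs => rw [← modByMonic_add_div f P]
    rw [mul_add, ← mul_assoc, mul_comm Q P, mul_assoc, add_modByMonic,
      self_mul_modByMonic hP, add_zero, ← hg]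
  rw [hred]
  have hgdeg : g.degree < (↑(n + 1) : WithBot ℕ) := hg ▸ hPdeg ▸ degree_modByMonic_lt f hP
  obtain ⟨h, hh⟩ : ∃ h, h = g /ₘ (X - C t) := ⟨_, rfl⟩
  have hgsplit : g = (X - C t) * h + C (g.eval t) := by
    have e1 := modByMonic_add_div g (X - C t)
    rw [modByMonic_X_sub_C_eq_C_eval] at e1
    rw [hh]
    linear_combination -e1
  have key : Q * g = P * h + (C (g.eval t) * Q - C (P.eval t) * h) := by
    linear_combination Q * hgsplit - h * hPsplit
  have hhdeg : h.degree < (n : ℕ) := by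
    have hmul : ((X - C t) * h).degree = h.degree + 1 := by
      rw [mul_comm, hXt.degree_mul, degree_X_sub_C]
    have hsub : ((X - C t) * h).degree < (↑(n + 1) : WithBot ℕ) := by
      have : (X - C t) * h = g - C (g.eval t) := by linear_combination -hgsplit
      rw [this]
      exact lt_of_le_of_lt (degree_sub_le _ _)
        (max_lt hgdeg (lt_of_le_of_lt degree_C_le (by exact_mod_cast WithBot.coe_lt_coe.2 (Nat.succ_pos n))))
    rw [hmul] at hsub
    rcases eq_or_ne h 0 with rfl | h0
    · simp only [degree_zero]
      exact WithBot.bot_lt_coe n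
    · rw [degree_eq_natDegree h0] at hsub ⊢
      have : h.natDegree + 1 < n + 1 := by exact_mod_cast hsub
      exact_mod_cast WithBot.coe_lt_coe.2 (by omega)
  have hrem : (Q * g) %ₘ P = C (g.eval t) * Q - C (P.eval t) * h := by
    rw [key, add_modByMonic, self_mul_modByMonic hP, zero_add,
      (modByMonic_eq_self_iff hP).2]
    rw [hPdeg]
    refine lt_of_le_of_lt (degree_sub_le _ _) (max_lt ?_ ?_)
    · refine lt_of_le_of_lt (degree_mul_le _ _) ?_
      have : Q.degree = (n : ℕ) := by rw [← hQdeg, degree_eq_natDegree hQmonic.ne_zero]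
      rw [this]
      calc (C (g.eval t)).degree + (n : ℕ) ≤ 0 + (n : ℕ) := by
            exact add_le_add_left degree_C_le _
        _ < (↑(n + 1) : WithBot ℕ) := by
            rw [zero_add]; exact_mod_cast WithBot.coe_lt_coe.2 (Nat.lt_succ_self n)
    · refine lt_of_le_of_lt (degree_mul_le _ _) ?_
      calc (C (P.eval t)).degree + h.degree ≤ 0 + h.degree := add_le_add_left degree_C_le _
        _ < (↑(n + 1) : WithBot ℕ) := by
            rw [zero_add]
            exact lt_trans hhdeg (by exact_mod_cast WithBot.coe_lt_coe.2 (Nat.lt_succ_self n))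
  rw [hrem, coeff_sub, coeff_C_mul, coeff_C_mul,
    coeff_eq_zero_of_degree_lt hhdeg, mul_zero, sub_zero,
    show Q.coeff n = 1 from hQdeg ▸ hQmonic.coeff_natDegree, mul_one, hg]
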